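/- Let T₁,…,Tₙ ⊆ F be finite sets and B = T₁ × ⋯ × Tₙ ⊆ F^n. Then the polynomials gᵢ(x) = ∏_{t∈Tᵢ}(xᵢ − t), for i = 1,…,n, generate the vanishing ideal I(B) of B in F[x₁,…,xₙ], and form a Gröbner basis of I(B) with respect to any term order. -/

import Mathlib

noncomputable section

open MvPolynomial

/-- `lt` is (the strict order of) a term order on monomials in `n` variables:
a linear order in which `1` (i.e. the exponent vector `0`) is minimal and which
is compatible with multiplication of monomials (addition of exponent vectors). -/
def IsTermOrder {n : ℕ} (lt : (Fin n →₀ ℕ) → (Fin n →₀ ℕ) → Prop) : Prop :=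
  IsStrictTotalOrder (Fin n →₀ ℕ) lt ∧ (∀ m : Fin n →₀ ℕ, m ≠ 0 → lt 0 m) ∧
    ∀ u v w : Fin n →₀ ℕ, lt u v → lt (u + w) (v + w)

/-- `m` is the leading monomial (exponent vector) of `f` with respect to the
term order `lt`. -/
def IsLeadingMonomial {K : Type*} [CommSemiring K] {n : ℕ}
    (lt : (Fin n →₀ ℕ) → (Fin n →₀ ℕ) → Prop)
    (f : MvPolynomial (Fin n) K) (m : Fin n →₀ ℕ) : Prop :=
  m ∈ f.support ∧ ∀ m' ∈ f.support, m' ≠ m → lt m' m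

namespace GroebnerBox

variable {K : Type*} [Field K] {n : ℕ}

lemma finset_max {α : Type*} {r : α → α → Prop} (h : IsStrictTotalOrder α r) :
    ∀ s : Finset α, s.Nonempty → ∃ m ∈ s, ∀ a ∈ s, a ≠ m → r a m := by
  classical
  haveI := h
  intro s
  induction s using Finset.induction_on with
  | empty => rintro ⟨a, ha⟩; simp at ha
  | @insert x s hxs ih =>
    intro _
    rcases s.eq_empty_or_nonempty with rfl | hs
    · exact ⟨x, by simp, by simp⟩
    · obtain ⟨m, hm, hmax⟩ := ih hs
      rcases trichotomous_of r x m with hxm | heq | hmx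
      · refine ⟨m, Finset.mem_insert_of_mem hm, ?_⟩
        intro a ha hne
        rcases Finset.mem_insert.1 ha with rfl | ha
        · exact hxm
        · exact hmax a ha hne
      · subst heq
        exact ⟨x, Finset.mem_insert_self _ _, fun a ha hne => by
          rcases Finset.mem_insert.1 ha with rfl | ha
          · exact absurd rfl hne
          · exact hmax a ha hne⟩
      · refine ⟨x, Finset.mem_insert_self _ _, ?_⟩
        intro a ha hne
        rcases Finset.mem_insert.1 ha with rfl | ha
        · exact absurd rfl hne
        · rcases eq_or_ne a m with rfl | hne'
          · exact hmx
          · exact trans_of r (hmax a ha hne') hmx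

lemma sum_single_le (m : Fin n →₀ ℕ) (i : Fin n) : m i ≤ m.sum fun _ k => k := by
  rcases eq_or_ne (m i) 0 with h | h
  · omega
  · exact Finset.single_le_sum (f := fun j => m j) (fun _ _ => Nat.zero_le _)
      (Finsupp.mem_support_iff.2 h)

lemma vanish_of_mem_span (T : Fin n → Finset K) (f : MvPolynomial (Fin n) K)
    (hf : f ∈ Ideal.span (Set.range fun i => ∏ t ∈ T i, (X i - C t)))
    (x : Fin n → K) (hx : ∀ i, x i ∈ T i) : eval x f = 0 := by
  refine Submodule.span_induction ?_ (by simp) (fun p q _ _ hp hq => by simp [hp, hq])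
    (fun p q _ hq => by simp [hq]) hf
  rintro p ⟨i, rfl⟩
  simp only [map_prod, map_sub, eval_X, eval_C]
  exact Finset.prod_eq_zero (hx i) (by ring)

lemma g_struct (i : Fin n) (s : Finset K) :
    coeff (Finsupp.single i s.card) (∏ t ∈ s, (X i - C t) : MvPolynomial (Fin n) K) = 1 ∧
    ∀ m ∈ (∏ t ∈ s, (X i - C t) : MvPolynomial (Fin n) K).support,
      ∃ k ≤ s.card, m = Finsupp.single i k := by
  classical
  induction s using Finset.induction_on with
  | empty =>
    constructor
    · simp [coeff_one]
    · intro m hm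
      rw [Finset.prod_empty, mem_support_iff, coeff_one] at hm
      refine ⟨0, le_refl _, ?_⟩
      by_contra h
      rcases eq_or_ne (0 : Fin n →₀ ℕ) m with rfl | h0
      · exact h (by simp)
      · simp [if_neg h0] at hm
  | @insert a s ha ih =>
    rw [Finset.prod_insert ha]
    obtain ⟨ihc, ihs⟩ := ih
    set P : MvPolynomial (Fin n) K := ∏ t ∈ s, (X i - C t) with hP
    have expand : (X i - C a) * P = X i * P - C a * P := by ring
    constructor
    · rw [Finset.card_insert_of_notMem ha, expand, coeff_sub]
      have h1 : Finsupp.single i (s.card + 1) = Finsupp.single i 1 + Finsupp.single i s.card := by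
        rw [← Finsupp.single_add]; ring_nf
      rw [h1, coeff_X_mul, ihc, coeff_C_mul]
      have : coeff (Finsupp.single i 1 + Finsupp.single i s.card) P = 0 := by
        by_contra h
        obtain ⟨k, hk, hkeq⟩ := ihs _ (mem_support_iff.2 h)
        rw [← Finsupp.single_add] at hkeq
        have := DFunLike.congr_fun hkeq i
        simp [Finsupp.single_apply] at this
        omega
      rw [this]; ring
    · intro m hm
      rw [expand, mem_support_iff, coeff_sub, coeff_C_mul] at hm
      have : coeff m (X i * P) ≠ 0 ∨ coeff m P ≠ 0 := by
        by_contra h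
        push_neg at h
        rw [h.1, h.2] at hm
        simp at hm
      rcases this with h | h
      · have hm' : m ∈ (X i * P).support := mem_support_iff.2 h
        rw [support_X_mul] at hm'
        obtain ⟨m', hmem, rfl⟩ := Finset.mem_map.1 hm'
        obtain ⟨k, hk, rfl⟩ := ihs _ hmem
        refine ⟨k + 1, ?_, ?_⟩
        · rw [Finset.card_insert_of_notMem ha]; omega
        · simp [addLeftEmbedding_apply, ← Finsupp.single_add, Nat.add_comm]
      · obtain ⟨k, hk, rfl⟩ := ihs _ (mem_support_iff.2 h)
        exact ⟨k, by rw [Finset.card_insert_of_notMem ha]; omega, rfl⟩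


lemma box_interp : ∀ {n : ℕ} (T : Fin n → Finset K) (f : MvPolynomial (Fin n) K),
    (∀ m ∈ f.support, ∀ i, m i < (T i).card) →
    (∀ x : Fin n → K, (∀ i, x i ∈ T i) → eval x f = 0) → f = 0 := by
  intro n
  induction n with
  | zero =>
    intro T f hs hv
    obtain ⟨a, rfl⟩ := C_surjective (Fin 0) f
    have := hv Fin.elim0 (fun i => i.elim0)
    rw [eval_C] at this
    rw [this, map_zero]
  | succ n ih =>
    intro T f hs hv
    rcases Finset.eq_empty_or_nonempty (T 0) with h0 | h0
    · ext m
      rw [coeff_zero]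
      by_contra h
      have := hs m (mem_support_iff.2 h) 0
      rw [h0] at this
      simp at this
    · have hcard0 : 0 < (T 0).card := Finset.card_pos.2 h0
      have hdeg : degreeOf 0 f < (T 0).card :=
        (degreeOf_lt_iff hcard0).2 fun m hm => hs m hm 0
      set p := finSuccEquiv K n f with hp
      have key : ∀ k, p.coeff k = 0 := by
        intro k
        apply ih (fun j => T j.succ)
        · intro m hm j
          have hc : coeff (m.cons k) f ≠ 0 := by
            rw [← finSuccEquiv_coeff_coeff]
            exact mem_support_iff.1 hm
          have := hs _ (mem_support_iff.2 hc) j.succ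
          rwa [Finsupp.cons_succ] at this
        · intro y hy
          have hq0 : Polynomial.map (eval y) p = 0 := by
            apply Polynomial.eq_zero_of_natDegree_lt_card_of_eval_eq_zero' _ (T 0)
            · intro t ht
              rw [← eval_eq_eval_mv_eval']
              apply hv
              intro i
              refine Fin.cases ?_ ?_ i
              · rwa [Fin.cons_zero]
              · intro j
                rw [Fin.cons_succ]
                exact hy j
            · calc (Polynomial.map (eval y) p).natDegree
                  ≤ p.natDegree := Polynomial.natDegree_map_le
                _ = degreeOf 0 f := natDegree_finSuccEquiv f
                _ < (T 0).card := hdeg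
          have := congrArg (fun q => Polynomial.coeff q k) hq0
          simpa [Polynomial.coeff_map] using this
      have hp0 : p = 0 := Polynomial.ext fun k => by rw [key k, Polynomial.coeff_zero]
      have := (finSuccEquiv K n).injective (a₁ := f) (a₂ := 0)
      rw [map_zero] at this
      exact this hp0


lemma reduce_monomial (T : Fin n → Finset K)
    (lt : (Fin n →₀ ℕ) → (Fin n →₀ ℕ) → Prop) (hlt : IsTermOrder lt)
    (hne : ∀ i, (T i).Nonempty) :
    ∀ (N : ℕ) (m : Fin n →₀ ℕ), (m.sum fun _ k => k) ≤ N →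
      ∃ r : MvPolynomial (Fin n) K,
        (monomial m (1 : K) - r) ∈
            Ideal.span (Set.range fun i => ∏ t ∈ T i, (X i - C t)) ∧
        (∀ μ ∈ r.support, ∀ i, μ i < (T i).card) ∧
        (∀ μ ∈ r.support, μ = m ∨ lt μ m) ∧
        ((∀ i, m i < (T i).card) → r = monomial m 1) := by
  classical
  haveI := hlt.1
  intro N
  induction N using Nat.strong_induction_on with
  | _ N IH =>
    intro m hm
    by_cases hsm : ∀ i, m i < (T i).card
    · refine ⟨monomial m 1, by simp, ?_, ?_, fun _ => rfl⟩
      · intro μ hμ i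
        rw [support_monomial, if_neg one_ne_zero, Finset.mem_singleton] at hμ
        subst hμ; exact hsm i
      · intro μ hμ
        rw [support_monomial, if_neg one_ne_zero, Finset.mem_singleton] at hμ
        exact Or.inl hμ
    · push_neg at hsm
      obtain ⟨i, hi⟩ := hsm
      set d := (T i).card with hd
      have hdpos : 0 < d := Finset.card_pos.2 (hne i)
      set g : MvPolynomial (Fin n) K := ∏ t ∈ T i, (X i - C t) with hg
      set m' : Fin n →₀ ℕ := m - Finsupp.single i d with hm'
      have hsingle_le : Finsupp.single i d ≤ m := Finsupp.single_le_iff.2 hi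
      have hmsplit : m' + Finsupp.single i d = m := tsub_add_cancel_of_le hsingle_le
      -- degree bookkeeping
      have hsum_add : ((m' + Finsupp.single i d).sum fun _ k => k)
          = (m'.sum fun _ k => k) + d := by
        rw [Finsupp.sum_add_index' (fun _ => rfl) (fun _ _ _ => rfl),
          Finsupp.sum_single_index rfl]
      have hmsum : (m'.sum fun _ k => k) + d ≤ N := by
        rw [← hsum_add, hmsplit]; exact hm
      -- h = X_i^d - g
      set h : MvPolynomial (Fin n) K := monomial (Finsupp.single i d) 1 - g with hh
      have hsupp_h : ∀ μ ∈ h.support, ∃ k < d, μ = Finsupp.single i k := by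
        intro μ hμ
        have hcμ : coeff μ (monomial (Finsupp.single i d) (1 : K)) - coeff μ g ≠ 0 := by
          rw [← coeff_sub]; exact mem_support_iff.1 hμ
        have hμg : coeff μ g ≠ 0 ∨ μ = Finsupp.single i d := by
          by_cases hc : μ = Finsupp.single i d
          · exact Or.inr hc
          · left
            intro h0
            rw [h0, coeff_monomial, if_neg (fun he => hc he.symm)] at hcμ
            simp at hcμ
        rcases hμg with hμg | rfl
        · obtain ⟨k, hk, rfl⟩ := (g_struct i (T i)).2 μ (mem_support_iff.2 hμg)
          refine ⟨k, ?_, rfl⟩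
          rcases Nat.lt_or_ge k d with hlt' | hge
          · exact hlt'
          · exfalso
            have : k = d := le_antisymm hk hge
            subst this
            rw [coeff_monomial, if_pos rfl, (g_struct i (T i)).1] at hcμ
            simp at hcμ
        · exfalso
          rw [coeff_monomial, if_pos rfl, (g_struct i (T i)).1] at hcμ
          simp at hcμ
      -- for each μ in supp h, recurse on m' + μ
      have hrec : ∀ μ ∈ h.support, ∃ rμ : MvPolynomial (Fin n) K,
          (monomial (m' + μ) (1 : K) - rμ) ∈
              Ideal.span (Set.range fun i => ∏ t ∈ T i, (X i - C t)) ∧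
          (∀ ν ∈ rμ.support, ∀ j, ν j < (T j).card) ∧
          (∀ ν ∈ rμ.support, lt ν m) := by
        intro μ hμ
        obtain ⟨k, hk, rfl⟩ := hsupp_h μ hμ
        have hdeg : ((m' + Finsupp.single i k).sum fun _ v => v) ≤ N - 1 := by
          rw [Finsupp.sum_add_index' (fun _ => rfl) (fun _ _ _ => rfl),
            Finsupp.sum_single_index rfl]
          omega
        have hNlt : N - 1 < N := by omega
        obtain ⟨rμ, h1, h2, h3, _⟩ := IH (N - 1) hNlt (m' + Finsupp.single i k) hdeg
        have hltm : lt (m' + Finsupp.single i k) m := by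
          have hne0 : (Finsupp.single i (d - k) : Fin n →₀ ℕ) ≠ 0 :=
            fun he => by
              have := DFunLike.congr_fun he i
              simp [Finsupp.single_apply] at this
              omega
          have h0 := hlt.2.1 _ hne0
          have := hlt.2.2 0 (Finsupp.single i (d - k)) (m' + Finsupp.single i k) h0
          rw [zero_add] at this
          have heq : Finsupp.single i (d - k) + (m' + Finsupp.single i k) = m := by
            rw [← hmsplit]
            ext j
            rcases eq_or_ne i j with rfl | hij
            · simp only [Finsupp.add_apply, Finsupp.single_eq_same]
              omega
            · simp [Finsupp.single_eq_of_ne' hij]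
          rwa [heq] at this
        refine ⟨rμ, h1, h2, ?_⟩
        intro ν hν
        rcases h3 ν hν with rfl | hlt'
        · exact hltm
        · exact trans_of lt hlt' hltm
      choose! R hR1 hR2 hR3 using hrec
      refine ⟨∑ μ ∈ h.support, C (coeff μ h) * R μ, ?_, ?_, ?_, ?_⟩
      · -- membership in ideal
        have expand : monomial m (1 : K)
            = monomial m' 1 * g + ∑ μ ∈ h.support, monomial (m' + μ) (coeff μ h) := by
          have e1 : monomial m (1 : K) = monomial m' 1 * monomial (Finsupp.single i d) 1 := by
            rw [monomial_mul, one_mul, hmsplit]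
          have e2 : monomial (Finsupp.single i d) (1 : K) = g + h := by
            rw [hh]; ring
          rw [e1, e2, mul_add]
          congr 1
          conv_lhs => rw [h.as_sum, Finset.mul_sum]
          exact Finset.sum_congr rfl fun μ _ => by rw [monomial_mul, one_mul]
        rw [expand]
        have : monomial m' (1:K) * g + ∑ μ ∈ h.support, monomial (m' + μ) (coeff μ h)
            - ∑ μ ∈ h.support, C (coeff μ h) * R μ
            = monomial m' 1 * g
              + ∑ μ ∈ h.support, C (coeff μ h) * (monomial (m' + μ) 1 - R μ) := by
          rw [add_sub_assoc, ← Finset.sum_sub_distrib]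
          congr 1
          refine Finset.sum_congr rfl fun μ _ => ?_
          rw [mul_sub, C_mul_monomial, mul_one]
        rw [this]
        refine Ideal.add_mem _ ?_ (Ideal.sum_mem _ fun μ hμ => ?_)
        · exact Ideal.mul_mem_left _ _ (Ideal.subset_span (Set.mem_range_self i))
        · exact Ideal.mul_mem_left _ _ (hR1 μ hμ)
      · -- smallness
        intro ν hν j
        have := mem_support_iff.1 hν
        rw [coeff_sum] at this
        obtain ⟨μ, hμ, hcne⟩ := Finset.exists_ne_zero_of_sum_ne_zero this
        rw [coeff_C_mul] at hcne
        have : ν ∈ (R μ).support := mem_support_iff.2 (right_ne_zero_of_mul hcne)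
        exact hR2 μ hμ ν this j
      · -- lt condition
        intro ν hν
        have := mem_support_iff.1 hν
        rw [coeff_sum] at this
        obtain ⟨μ, hμ, hcne⟩ := Finset.exists_ne_zero_of_sum_ne_zero this
        rw [coeff_C_mul] at hcne
        have : ν ∈ (R μ).support := mem_support_iff.2 (right_ne_zero_of_mul hcne)
        exact Or.inr (hR3 μ hμ ν this)
      · -- small case (vacuous here)
        intro hall
        exact absurd (hall i) (by omega)


lemma lm_g (T : Fin n → Finset K) (lt : (Fin n →₀ ℕ) → (Fin n →₀ ℕ) → Prop)
    (hlt : IsTermOrder lt) (i : Fin n) :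
    IsLeadingMonomial lt (∏ t ∈ T i, (X i - C t) : MvPolynomial (Fin n) K)
      (Finsupp.single i (T i).card) := by
  constructor
  · rw [mem_support_iff, (g_struct i (T i)).1]
    exact one_ne_zero
  · intro m' hm' hne
    obtain ⟨k, hk, rfl⟩ := (g_struct i (T i)).2 m' hm'
    have hkne : k ≠ (T i).card := fun he => hne (by rw [he])
    have h0 := hlt.2.1 (Finsupp.single i ((T i).card - k)) (by
      intro he
      have := DFunLike.congr_fun he i
      simp only [Finsupp.single_eq_same, Finsupp.coe_zero, Pi.zero_apply] at this
      omega)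
    have h2 := hlt.2.2 0 _ (Finsupp.single i k) h0
    rw [zero_add, ← Finsupp.single_add] at h2
    have heq : (T i).card - k + k = (T i).card := by omega
    rwa [heq] at h2

lemma reduce_poly (T : Fin n → Finset K)
    (lt : (Fin n →₀ ℕ) → (Fin n →₀ ℕ) → Prop) (hlt : IsTermOrder lt)
    (hne : ∀ i, (T i).Nonempty) (f : MvPolynomial (Fin n) K) :
    ∃ r : MvPolynomial (Fin n) K,
      (f - r) ∈ Ideal.span (Set.range fun i => ∏ t ∈ T i, (X i - C t)) ∧
      (∀ μ ∈ r.support, ∀ i, μ i < (T i).card) ∧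
      (∀ mf, mf ∈ f.support → (∀ m' ∈ f.support, m' ≠ mf → lt m' mf) →
        (∀ i, mf i < (T i).card) → coeff mf r = coeff mf f) := by
  classical
  haveI := hlt.1
  have hrec : ∀ m ∈ f.support, ∃ r : MvPolynomial (Fin n) K,
      (monomial m (1 : K) - r) ∈
          Ideal.span (Set.range fun i => ∏ t ∈ T i, (X i - C t)) ∧
      (∀ μ ∈ r.support, ∀ i, μ i < (T i).card) ∧
      (∀ μ ∈ r.support, μ = m ∨ lt μ m) ∧
      ((∀ i, m i < (T i).card) → r = monomial m 1) :=
    fun m _ => reduce_monomial T lt hlt hne (m.sum fun _ k => k) m le_rfl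
  choose! R hR1 hR2 hR3 hR4 using hrec
  refine ⟨∑ m ∈ f.support, C (coeff m f) * R m, ?_, ?_, ?_⟩
  · have expand : f = ∑ m ∈ f.support, C (coeff m f) * monomial m 1 := by
      conv_lhs => rw [f.as_sum]
      exact Finset.sum_congr rfl fun m _ => by rw [C_mul_monomial, mul_one]
    have key : f - ∑ m ∈ f.support, C (coeff m f) * R m
        = ∑ m ∈ f.support, C (coeff m f) * (monomial m 1 - R m) := by
      nth_rewrite 1 [expand]
      rw [← Finset.sum_sub_distrib]
      exact Finset.sum_congr rfl fun m _ => by rw [mul_sub]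
    rw [key]
    exact Ideal.sum_mem _ fun m hm => Ideal.mul_mem_left _ _ (hR1 m hm)
  · intro ν hν j
    have := mem_support_iff.1 hν
    rw [coeff_sum] at this
    obtain ⟨m, hm, hcne⟩ := Finset.exists_ne_zero_of_sum_ne_zero this
    rw [coeff_C_mul] at hcne
    exact hR2 m hm ν (mem_support_iff.2 (right_ne_zero_of_mul hcne)) j
  · intro mf hmem hmax hsmall
    rw [coeff_sum, Finset.sum_eq_single mf]
    · rw [hR4 mf hmem hsmall, coeff_C_mul, coeff_monomial, if_pos rfl, mul_one]
    · intro m hm hne'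
      rw [coeff_C_mul]
      have hz : coeff mf (R m) = 0 := by
        by_contra hc
        rcases hR3 m hm mf (mem_support_iff.2 hc) with heq | hlt'
        · exact hne' heq.symm
        · exact irrefl_of lt mf (trans_of lt hlt' (hmax m hm hne'))
      rw [hz, mul_zero]
    · intro hmem'
      exact absurd hmem hmem'

end GroebnerBox

open GroebnerBox in
/-- The polynomials `gᵢ = ∏_{t ∈ Tᵢ} (xᵢ − t)` generate the vanishing ideal of the
box `B = T₁ × ⋯ × Tₙ`, and they form a Gröbner basis of it with respect to any
term order (the leading monomial of some `gᵢ` divides, i.e. is pointwise `≤`, the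
leading monomial of any nonzero polynomial vanishing on `B`). -/
theorem groebner_basis_of_box {K : Type*} [Field K] {n : ℕ} (T : Fin n → Finset K)
    (lt : (Fin n →₀ ℕ) → (Fin n →₀ ℕ) → Prop) (hlt : IsTermOrder lt) :
    (∀ f : MvPolynomial (Fin n) K,
        f ∈ Ideal.span (Set.range fun i => ∏ t ∈ T i, (X i - C t)) ↔
          ∀ x : Fin n → K, (∀ i, x i ∈ T i) → eval x f = 0) ∧
    (∀ f : MvPolynomial (Fin n) K, f ≠ 0 →
        (∀ x : Fin n → K, (∀ i, x i ∈ T i) → eval x f = 0) →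
        ∃ i : Fin n, ∃ mg mf : Fin n →₀ ℕ,
          IsLeadingMonomial lt (∏ t ∈ T i, (X i - C t)) mg ∧
          IsLeadingMonomial lt f mf ∧ mg ≤ mf) := by
  classical
  constructor
  · intro f
    constructor
    · intro hf x hx
      exact vanish_of_mem_span T f hf x hx
    · intro hv
      by_cases hne : ∀ i, (T i).Nonempty
      · obtain ⟨r, hrI, hsmall, -⟩ := reduce_poly T lt hlt hne f
        have hr0 : r = 0 := by
          apply box_interp T r hsmall
          intro x hx
          have h1 := vanish_of_mem_span T _ hrI x hx
          rw [map_sub, hv x hx, zero_sub, neg_eq_zero] at h1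
          exact h1
        rw [hr0, sub_zero] at hrI
        exact hrI
      · push_neg at hne
        obtain ⟨i, hi⟩ := hne
        have h1 : (1 : MvPolynomial (Fin n) K) ∈
            Ideal.span (Set.range fun i => ∏ t ∈ T i, (X i - C t)) := by
          apply Ideal.subset_span
          exact ⟨i, by simp [hi]⟩
        rw [(Ideal.eq_top_iff_one _).2 h1]
        exact Submodule.mem_top
  · intro f hf hv
    obtain ⟨mf, hmem, hmax⟩ :=
      finset_max hlt.1 f.support (support_nonempty.2 hf)
    have hLMf : IsLeadingMonomial lt f mf := ⟨hmem, hmax⟩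
    have hex : ∃ i, (T i).card ≤ mf i := by
      by_cases hne : ∀ i, (T i).Nonempty
      · by_contra hcon
        push_neg at hcon
        obtain ⟨r, hrI, hsmall, hcoeff⟩ := reduce_poly T lt hlt hne f
        have hr0 : r = 0 := by
          apply box_interp T r hsmall
          intro x hx
          have h1 := vanish_of_mem_span T _ hrI x hx
          rw [map_sub, hv x hx, zero_sub, neg_eq_zero] at h1
          exact h1
        have := hcoeff mf hmem hmax hcon
        rw [hr0, coeff_zero] at this
        exact (mem_support_iff.1 hmem) this.symm
      · push_neg at hne
        obtain ⟨i, hi⟩ := hne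
        exact ⟨i, by rw [hi, Finset.card_empty]; exact Nat.zero_le _⟩
    obtain ⟨i, hi⟩ := hex
    exact ⟨i, Finsupp.single i (T i).card, mf, lm_g T lt hlt i, hLMf,
      Finsupp.single_le_iff.2 hi⟩
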